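/- Let h : Δ → Δ be a holomorphic map of the open unit disk to itself with h(0) = 0, and set λ = |h'(0)| with λ > 0. Then the open disk of radius r = ((1 - √(1-λ²))/λ)² centered at 0 is contained in the image h(Δ). -/

import Mathlib

open Metric Set Complex intervalIntegral MeasureTheory

/-- Primitive of a holomorphic function on the unit ball. -/
lemma landau_exists_primitive {V : ℂ → ℂ} (hV : DifferentiableOn ℂ V (ball (0:ℂ) 1)) :
    ∃ L : ℂ → ℂ, L 0 = 0 ∧ ∀ z ∈ ball (0:ℂ) 1, HasDerivAt L (V z) z := by
  have hVan : AnalyticOnNhd ℂ V (ball (0:ℂ) 1) :=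
    (analyticOnNhd_iff_differentiableOn isOpen_ball).2 hV
  have hV' : DifferentiableOn ℂ (deriv V) (ball (0:ℂ) 1) :=
    (hVan.deriv).differentiableOn
  have hVc : ContinuousOn V (ball (0:ℂ) 1) := hV.continuousOn
  have hV'c : ContinuousOn (deriv V) (ball (0:ℂ) 1) := hV'.continuousOn
  refine ⟨fun z => ∫ t in (0:ℝ)..1, z * V ((t:ℂ) * z), by simp, fun z hz => ?_⟩
  rw [mem_ball_zero_iff] at hz
  set R : ℝ := (1 + ‖z‖) / 2 with hR
  have hR1 : R < 1 := by rw [hR]; linarith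
  have hR0 : 0 < R := by rw [hR]; positivity
  have hzR : ‖z‖ < R := by rw [hR]; linarith [norm_nonneg z]
  have hKsub : closedBall (0:ℂ) R ⊆ ball (0:ℂ) 1 := closedBall_subset_ball hR1
  obtain ⟨C, hC⟩ := (isCompact_closedBall (0:ℂ) R).exists_bound_of_continuousOn
    (hVc.mono hKsub)
  obtain ⟨C', hC'⟩ := (isCompact_closedBall (0:ℂ) R).exists_bound_of_continuousOn
    (hV'c.mono hKsub)
  set ε : ℝ := (1 - ‖z‖) / 2 with hε
  have hεpos : 0 < ε := by rw [hε]; linarith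
  -- membership facts
  have hxmem : ∀ x ∈ ball z ε, ∀ t : ℝ, t ∈ Set.Icc (0:ℝ) 1 → (t:ℂ) * x ∈ closedBall (0:ℂ) R := by
    intro x hx t ht
    rw [mem_ball, dist_eq_norm] at hx
    have hxR : ‖x‖ < R := by
      calc ‖x‖ = ‖x - z + z‖ := by ring_nf
      _ ≤ ‖x - z‖ + ‖z‖ := norm_add_le _ _
      _ < ε + ‖z‖ := by linarith
      _ = R := by rw [hε, hR]; ring
    rw [mem_closedBall_zero_iff, norm_mul, Complex.norm_real, Real.norm_eq_abs,
      _root_.abs_of_nonneg ht.1]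
    nlinarith [ht.2, norm_nonneg x]
  have hzmem : ∀ t : ℝ, t ∈ Set.Icc (0:ℝ) 1 → (t:ℂ) * z ∈ ball (0:ℂ) 1 := by
    intro t ht
    exact hKsub (hxmem z (mem_ball_self hεpos) t ht)
  have hIsub : Set.uIoc (0:ℝ) 1 ⊆ Set.Icc (0:ℝ) 1 := by
    rw [uIoc_of_le (zero_le_one)]; exact Ioc_subset_Icc_self
  -- continuity of t ↦ V (t x) on Icc 0 1 when x ∈ ball z ε  (via closedBall)
  have hcont : ∀ x ∈ ball z ε, ContinuousOn (fun t : ℝ => V ((t:ℂ) * x)) (Set.Icc (0:ℝ) 1) := by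
    intro x hx
    refine (hVc.mono hKsub).comp (Continuous.continuousOn (by continuity)) ?_
    intro t ht; exact hxmem x hx t ht
  have hcont' : ∀ x ∈ ball z ε, ContinuousOn (fun t : ℝ => deriv V ((t:ℂ) * x))
      (Set.Icc (0:ℝ) 1) := by
    intro x hx
    refine (hV'c.mono hKsub).comp (Continuous.continuousOn (by continuity)) ?_
    intro t ht; exact hxmem x hx t ht
  have hzball : z ∈ ball z ε := mem_ball_self hεpos
  -- apply differentiation under the integral sign
  have key := intervalIntegral.hasDerivAt_integral_of_dominated_loc_of_deriv_le
    (𝕜 := ℂ) (μ := volume) (a := (0:ℝ)) (b := 1)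
    (F := fun x t => x * V ((t:ℂ) * x))
    (F' := fun x t => V ((t:ℂ) * x) + (t:ℂ) * x * deriv V ((t:ℂ) * x))
    (x₀ := z) (bound := fun _ => C + R * C') (s := ball z ε) (ball_mem_nhds z hεpos)
    ?_ ?_ ?_ ?_ ?_ ?_
  · obtain ⟨-, hD⟩ := key
    -- now compute the integral of F' z
    have hFTC : ∫ t in (0:ℝ)..1, (V ((t:ℂ) * z) + (t:ℂ) * z * deriv V ((t:ℂ) * z)) = V z := by
      have hg : ∀ t ∈ Set.uIcc (0:ℝ) 1, HasDerivAt (fun t : ℝ => (t:ℂ) * V ((t:ℂ) * z))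
          (V ((t:ℂ) * z) + (t:ℂ) * z * deriv V ((t:ℂ) * z)) t := by
        intro t ht
        rw [Set.uIcc_of_le zero_le_one] at ht
        have htz : (t:ℂ) * z ∈ ball (0:ℂ) 1 := hzmem t ht
        have hVd : HasDerivAt V (deriv V ((t:ℂ) * z)) ((t:ℂ) * z) :=
          (hV.differentiableAt (isOpen_ball.mem_nhds htz)).hasDerivAt
        have hinner : HasDerivAt (fun ζ : ℂ => V (ζ * z)) (deriv V ((t:ℂ) * z) * z) (t:ℂ) :=
          HasDerivAt.comp _ hVd (by simpa using (hasDerivAt_id (t:ℂ)).mul_const z)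
        have hfull : HasDerivAt (fun ζ : ℂ => ζ * V (ζ * z))
            (1 * V ((t:ℂ) * z) + (t:ℂ) * (deriv V ((t:ℂ) * z) * z)) (t:ℂ) :=
          (hasDerivAt_id (t:ℂ)).mul hinner
        have := hfull.comp_ofReal
        convert this using 1
        ring
      have hint : IntervalIntegrable
          (fun t : ℝ => V ((t:ℂ) * z) + (t:ℂ) * z * deriv V ((t:ℂ) * z)) volume 0 1 := by
        apply ContinuousOn.intervalIntegrable
        rw [Set.uIcc_of_le zero_le_one]
        exact ((hcont z hzball).add
          (((Complex.continuous_ofReal.continuousOn.mul continuousOn_const)).mul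
            (hcont' z hzball)))
      have := intervalIntegral.integral_eq_sub_of_hasDerivAt hg hint
      rw [this]
      simp
    rw [hFTC] at hD
    exact hD
  · -- measurability of F x
    filter_upwards [ball_mem_nhds z hεpos] with x hx
    apply ContinuousOn.aestronglyMeasurable _ measurableSet_uIoc
    exact ((continuousOn_const.mul ((hcont x hx).mono hIsub)))
  · -- integrability of F z
    apply ContinuousOn.intervalIntegrable
    rw [Set.uIcc_of_le zero_le_one]
    exact continuousOn_const.mul (hcont z hzball)
  · -- measurability of F' z
    apply ContinuousOn.aestronglyMeasurable _ measurableSet_uIoc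
    refine ContinuousOn.add ((hcont z hzball).mono hIsub) ?_
    exact ((Complex.continuous_ofReal.continuousOn.mul continuousOn_const)).mul
      ((hcont' z hzball).mono hIsub)
  · -- bound
    refine Filter.Eventually.of_forall fun t => fun ht x hx => ?_
    have htI : t ∈ Set.Icc (0:ℝ) 1 := hIsub ht
    have h1 : (t:ℂ) * x ∈ closedBall (0:ℂ) R := hxmem x hx t htI
    have hb1 : ‖V ((t:ℂ) * x)‖ ≤ C := hC _ h1
    have hb2 : ‖deriv V ((t:ℂ) * x)‖ ≤ C' := hC' _ h1
    have hC'0 : 0 ≤ C' := le_trans (norm_nonneg _) hb2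
    have hn : ‖(t:ℂ) * x‖ ≤ R := mem_closedBall_zero_iff.1 h1
    calc ‖V ((t:ℂ) * x) + (t:ℂ) * x * deriv V ((t:ℂ) * x)‖
        ≤ ‖V ((t:ℂ) * x)‖ + ‖(t:ℂ) * x * deriv V ((t:ℂ) * x)‖ := norm_add_le _ _
      _ ≤ C + R * C' := by
          rw [norm_mul]
          have : ‖(t:ℂ) * x‖ * ‖deriv V ((t:ℂ) * x)‖ ≤ R * C' := by
            apply mul_le_mul hn hb2 (norm_nonneg _) hR0.le
          linarith
  · exact intervalIntegrable_const
  · -- differentiability of x ↦ F x t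
    refine Filter.Eventually.of_forall fun t => fun ht x hx => ?_
    have htI : t ∈ Set.Icc (0:ℝ) 1 := hIsub ht
    have h1 : (t:ℂ) * x ∈ ball (0:ℂ) 1 := hKsub (hxmem x hx t htI)
    have hVd : HasDerivAt V (deriv V ((t:ℂ) * x)) ((t:ℂ) * x) :=
      (hV.differentiableAt (isOpen_ball.mem_nhds h1)).hasDerivAt
    have hinner : HasDerivAt (fun y : ℂ => V ((t:ℂ) * y)) (deriv V ((t:ℂ) * x) * (t:ℂ)) x :=
      HasDerivAt.comp _ hVd (by simpa using (hasDerivAt_id x).const_mul (t:ℂ))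
    have := (hasDerivAt_id x).mul hinner
    refine this.congr_deriv ?_
    show 1 * _ + x * _ = _
    ring

lemma landau_const_of_deriv_zero {N : ℂ → ℂ} (hN : ∀ z ∈ ball (0:ℂ) 1, HasDerivAt N 0 z) :
    ∀ z ∈ ball (0:ℂ) 1, N z = N 0 := by
  intro z hz
  rw [mem_ball_zero_iff] at hz
  have h := intervalIntegral.integral_unitInterval_deriv_eq_sub (𝕜 := ℂ) (E := ℂ)
    (f := N) (f' := fun _ => 0) (z₀ := 0) (z₁ := z) (by fun_prop) ?_
  · have : N z - N 0 = 0 := by simpa using h.symm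
    linear_combination this
  · intro t ht
    apply hN
    rw [mem_ball_zero_iff]
    simp only [zero_add]
    rw [norm_smul, Real.norm_eq_abs, _root_.abs_of_nonneg ht.1]
    nlinarith [ht.2, norm_nonneg z]

lemma landau_mobius_normSq (a u : ℂ) :
    Complex.normSq (1 - (starRingEnd ℂ) a * u) - Complex.normSq (a - u)
      = (1 - Complex.normSq a) * (1 - Complex.normSq u) := by
  simp only [Complex.normSq_apply, Complex.sub_re, Complex.sub_im, Complex.mul_re, Complex.mul_im,
    Complex.one_re, Complex.one_im, Complex.conj_re, Complex.conj_im]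
  ring

lemma landau_mobius_lt_one {a u : ℂ} (ha : ‖a‖ < 1) (hu : ‖u‖ < 1) :
    (1 - (starRingEnd ℂ) a * u) ≠ 0 ∧
      ‖(a - u) / (1 - (starRingEnd ℂ) a * u)‖ < 1 := by
  have h1 : Complex.normSq a < 1 := by rw [← Complex.sq_norm]; nlinarith [norm_nonneg a]
  have h2 : Complex.normSq u < 1 := by rw [← Complex.sq_norm]; nlinarith [norm_nonneg u]
  have key := landau_mobius_normSq a u
  have hlt : Complex.normSq (a - u) < Complex.normSq (1 - (starRingEnd ℂ) a * u) := by
    nlinarith [Complex.normSq_nonneg (a - u)]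
  have hne : (1 - (starRingEnd ℂ) a * u) ≠ 0 := by
    intro hzero
    rw [hzero] at hlt
    simp at hlt
    nlinarith [Complex.normSq_nonneg (a - u)]
  refine ⟨hne, ?_⟩
  have hpos : 0 < ‖1 - (starRingEnd ℂ) a * u‖ := by
    simpa [AbsoluteValue.pos_iff] using hne
  rw [norm_div, div_lt_one hpos]
  have := norm_nonneg (a - u)
  have := norm_nonneg (1 - (starRingEnd ℂ) a * u)
  rw [← Complex.sq_norm, ← Complex.sq_norm] at hlt
  nlinarith

set_option maxHeartbeats 2000000 in
theorem stmt_0 (h : ℂ → ℂ) (lam : ℝ)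
    (hmaps : Set.MapsTo h (Metric.ball 0 1) (Metric.ball 0 1))
    (hdiff : DifferentiableOn ℂ h (Metric.ball 0 1))
    (h0 : h 0 = 0) (hlam : ‖deriv h 0‖ = lam) (hpos : 0 < lam) :
    Metric.ball (0 : ℂ) (((1 - Real.sqrt (1 - lam ^ 2)) / lam) ^ 2) ⊆
      h '' Metric.ball 0 1 := by
  intro w hw
  by_contra hwim
  have h0mem : (0:ℂ) ∈ ball (0:ℂ) 1 := by simp
  have hlam1 : lam ≤ 1 := by
    rw [← hlam]
    exact Complex.norm_deriv_le_one_of_mapsTo_ball hdiff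
      (by rw [h0]; exact hmaps.mono_right ball_subset_closedBall) one_pos
  set s : ℝ := Real.sqrt (1 - lam ^ 2) with hsdef
  set ρ : ℝ := (1 - s) / lam with hρdef
  have hs0 : 0 ≤ s := Real.sqrt_nonneg _
  have hs2 : s ^ 2 = 1 - lam ^ 2 := Real.sq_sqrt (by nlinarith)
  have hs1 : s < 1 := by nlinarith
  have hρpos : 0 < ρ := div_pos (by linarith) hpos
  have hρ1 : ρ ≤ 1 := by
    rw [hρdef, div_le_one hpos]
    nlinarith
  have hwlt : ‖w‖ < ρ ^ 2 := by
    rw [mem_ball_zero_iff] at hw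
    exact hw
  have hwne : w ≠ 0 := by
    rintro rfl
    exact hwim ⟨0, h0mem, h0⟩
  have hw1 : ‖w‖ < 1 := lt_of_lt_of_le hwlt (by nlinarith)
  have hhz : ∀ z ∈ ball (0:ℂ) 1, ‖h z‖ < 1 := fun z hz => by
    have := hmaps hz; rwa [mem_ball_zero_iff] at this
  set F : ℂ → ℂ := fun z => (w - h z) / (1 - (starRingEnd ℂ) w * h z) with hFdef
  have hden : ∀ z ∈ ball (0:ℂ) 1, (1 - (starRingEnd ℂ) w * h z) ≠ 0 :=
    fun z hz => (landau_mobius_lt_one hw1 (hhz z hz)).1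
  have hFlt : ∀ z ∈ ball (0:ℂ) 1, ‖F z‖ < 1 :=
    fun z hz => (landau_mobius_lt_one hw1 (hhz z hz)).2
  have hFne : ∀ z ∈ ball (0:ℂ) 1, F z ≠ 0 := by
    intro z hz
    apply div_ne_zero _ (hden z hz)
    rw [sub_ne_zero]
    intro he
    exact hwim ⟨z, hz, he.symm⟩
  have hFdiff : DifferentiableOn ℂ F (ball (0:ℂ) 1) := by
    apply DifferentiableOn.div
    · exact (differentiableOn_const _).sub hdiff
    · exact (differentiableOn_const _).sub ((differentiableOn_const _).mul hdiff)
    · exact hden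
  have hF' : DifferentiableOn ℂ (deriv F) (ball (0:ℂ) 1) :=
    (((analyticOnNhd_iff_differentiableOn isOpen_ball).2 hFdiff).deriv).differentiableOn
  set V : ℂ → ℂ := fun z => deriv F z / F z with hVdef
  have hVdiff : DifferentiableOn ℂ V (ball (0:ℂ) 1) := hF'.div hFdiff hFne
  obtain ⟨L, hL0, hL⟩ := landau_exists_primitive hVdiff
  -- F z = w * exp (L z)
  have hF0 : F 0 = w := by simp [hFdef, h0]
  have hNder : ∀ z ∈ ball (0:ℂ) 1, HasDerivAt (fun z => F z * Complex.exp (-L z)) 0 z := by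
    intro z hz
    have hF_at : HasDerivAt F (deriv F z) z :=
      (hFdiff.differentiableAt (isOpen_ball.mem_nhds hz)).hasDerivAt
    have hE : HasDerivAt (fun z => Complex.exp (-L z)) (Complex.exp (-L z) * (-V z)) z :=
      ((hL z hz).neg).cexp
    have := hF_at.mul hE
    refine this.congr_deriv ?_
    rw [hVdef]
    field_simp [hFne z hz]
    ring
  have hNconst := landau_const_of_deriv_zero hNder
  have hFeq : ∀ z ∈ ball (0:ℂ) 1, F z = w * Complex.exp (L z) := by
    intro z hz
    have hc := hNconst z hz
    rw [hL0, hF0] at hc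
    simp only [neg_zero, Complex.exp_zero, mul_one] at hc
    have : F z * Complex.exp (-L z) * Complex.exp (L z) = w * Complex.exp (L z) := by rw [hc]
    rwa [mul_assoc, ← Complex.exp_add, neg_add_cancel, Complex.exp_zero, mul_one] at this
  set a : ℂ := Complex.exp (Complex.log w / 2) with hadef
  set G : ℂ → ℂ := fun z => Complex.exp ((L z + Complex.log w) / 2) with hGdef
  have hG0 : G 0 = a := by simp [hGdef, hL0, hadef]
  have hGsq : ∀ z ∈ ball (0:ℂ) 1, G z ^ 2 = F z := by
    intro z hz
    rw [hGdef, hFeq z hz, sq, ← Complex.exp_add]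
    rw [show (L z + Complex.log w) / 2 + (L z + Complex.log w) / 2 = L z + Complex.log w by ring,
      Complex.exp_add, Complex.exp_log hwne, mul_comm]
  have ha2 : a ^ 2 = w := by
    rw [hadef, sq, ← Complex.exp_add,
      show Complex.log w / 2 + Complex.log w / 2 = Complex.log w by ring, Complex.exp_log hwne]
  set T : ℝ := Real.sqrt ‖w‖ with hTdef
  have hT0 : 0 < T := Real.sqrt_pos.2 (norm_pos_iff.2 hwne)
  have hTsq : T ^ 2 = ‖w‖ := Real.sq_sqrt (norm_nonneg w)
  have hT1 : T < 1 := by nlinarith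
  have habsa : ‖a‖ = T := by
    have h1 : ‖a‖ ^ 2 = T ^ 2 := by rw [← norm_pow, ha2, hTsq]
    nlinarith [norm_nonneg a]
  have ha1 : ‖a‖ < 1 := by rw [habsa]; exact hT1
  have hGlt : ∀ z ∈ ball (0:ℂ) 1, ‖G z‖ < 1 := by
    intro z hz
    have h1 : ‖G z‖ ^ 2 = ‖F z‖ := by rw [← norm_pow, hGsq z hz]
    nlinarith [norm_nonneg (G z), hFlt z hz]
  set H : ℂ → ℂ := fun z => (a - G z) / (1 - (starRingEnd ℂ) a * G z) with hHdef
  have hHden : ∀ z ∈ ball (0:ℂ) 1, (1 - (starRingEnd ℂ) a * G z) ≠ 0 :=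
    fun z hz => (landau_mobius_lt_one ha1 (hGlt z hz)).1
  have hHmaps : MapsTo H (ball (0:ℂ) 1) (ball (0:ℂ) 1) := by
    intro z hz
    rw [mem_ball_zero_iff]
    exact (landau_mobius_lt_one ha1 (hGlt z hz)).2
  have hGder : ∀ z ∈ ball (0:ℂ) 1, HasDerivAt G (G z * (V z / 2)) z := by
    intro z hz
    exact (((hL z hz).add_const (Complex.log w)).div_const 2).cexp
  have hHdiff : DifferentiableOn ℂ H (ball (0:ℂ) 1) := by
    intro z hz
    apply DifferentiableAt.differentiableWithinAt
    apply DifferentiableAt.div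
    · exact (differentiableAt_const _).sub (hGder z hz).differentiableAt
    · exact (differentiableAt_const _).sub
        ((differentiableAt_const _).mul (hGder z hz).differentiableAt)
    · exact hHden z hz
  have hH0 : H 0 = 0 := by simp [hHdef, hG0]
  have hschwarz : ‖deriv H 0‖ ≤ 1 :=
    Complex.norm_deriv_le_one_of_mapsTo_ball hHdiff
      (by rw [hH0]; exact hHmaps.mono_right ball_subset_closedBall) one_pos
  -- compute deriv H 0
  have hGd0 : HasDerivAt G (a * (V 0 / 2)) 0 := by
    have := hGder 0 h0mem; rwa [hG0] at this
  have hHd : HasDerivAt H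
      (((-(a * (V 0 / 2))) * (1 - (starRingEnd ℂ) a * G 0)
        - (a - G 0) * (-((starRingEnd ℂ) a * (a * (V 0 / 2)))))
        / (1 - (starRingEnd ℂ) a * G 0) ^ 2) 0 :=
    (hGd0.const_sub a).div ((hGd0.const_mul _).const_sub 1) (hHden 0 h0mem)
  have hderivH : deriv H 0 = -(a * (V 0 / 2)) / (1 - (starRingEnd ℂ) a * a) := by
    rw [hHd.deriv, hG0]
    have hne : (1 - (starRingEnd ℂ) a * a) ≠ 0 := by
      have := hHden 0 h0mem; rwa [hG0] at this
    rw [div_eq_div_iff (pow_ne_zero 2 hne) hne]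
    ring
  -- compute deriv F 0 and V 0
  have hd_at : HasDerivAt h (deriv h 0) 0 :=
    (hdiff.differentiableAt (isOpen_ball.mem_nhds h0mem)).hasDerivAt
  have hFd : HasDerivAt F
      (((-(deriv h 0)) * (1 - (starRingEnd ℂ) w * h 0)
        - (w - h 0) * (-((starRingEnd ℂ) w * deriv h 0)))
        / (1 - (starRingEnd ℂ) w * h 0) ^ 2) 0 :=
    (hd_at.const_sub w).div ((hd_at.const_mul _).const_sub 1) (hden 0 h0mem)
  have hderivF : deriv F 0 = -(deriv h 0) * (1 - ((Complex.normSq w : ℝ) : ℂ)) := by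
    rw [hFd.deriv, h0]
    rw [← Complex.mul_conj]
    field_simp
    ring
  have hV0 : V 0 = -(deriv h 0) * (1 - ((Complex.normSq w : ℝ) : ℂ)) / w := by
    rw [hVdef]
    simp only [hderivF, hF0]
  -- abs computations
  have hnsa : ((starRingEnd ℂ) a * a) = ((T ^ 2 : ℝ) : ℂ) := by
    rw [mul_comm, Complex.mul_conj, Complex.normSq_eq_norm_sq, habsa]
  have hnsw : Complex.normSq w = T ^ 4 := by
    rw [Complex.normSq_eq_norm_sq, ← hTsq]; ring
  have habsH : ‖deriv H 0‖ = T * (lam * (1 - T ^ 4) / T ^ 2 / 2) / (1 - T ^ 2) := by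
    rw [hderivH, hV0, hnsa, hnsw]
    rw [show (1 : ℂ) - ((T ^ 2 : ℝ) : ℂ) = (((1 - T ^ 2 : ℝ)) : ℂ) by push_cast; ring]
    rw [show (1 : ℂ) - ((T ^ 4 : ℝ) : ℂ) = (((1 - T ^ 4 : ℝ)) : ℂ) by push_cast; ring]
    simp only [norm_div, norm_mul, norm_neg, Complex.norm_real, Real.norm_eq_abs, Complex.norm_two,
      habsa, hlam]
    rw [← hTsq, _root_.abs_of_nonneg (by nlinarith [sq_nonneg T, sq_nonneg (T ^ 2)] : (0:ℝ) ≤ 1 - T ^ 4),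
      _root_.abs_of_nonneg (by nlinarith : (0:ℝ) ≤ 1 - T ^ 2)]
  -- endgame: real inequalities
  have h1T2 : (0:ℝ) < 1 - T ^ 2 := by nlinarith
  have hkey : lam * (1 + T ^ 2) ≤ 2 * T := by
    rw [habsH, div_le_one h1T2] at hschwarz
    have heq : T * (lam * (1 - T ^ 4) / T ^ 2 / 2) = lam * (1 - T ^ 4) / (2 * T) := by
      field_simp
    rw [heq, div_le_iff₀ (by positivity : (0:ℝ) < 2 * T)] at hschwarz
    nlinarith [hschwarz, h1T2, hT0]
  have hTρ : T < ρ := by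
    have := Real.sqrt_lt_sqrt (norm_nonneg w) hwlt
    rwa [← hTdef, Real.sqrt_sq hρpos.le] at this
  have hlamρ : lam * ρ = 1 - s := by
    rw [hρdef]
    field_simp
  have hρeq : lam * ρ ^ 2 + lam = 2 * ρ := by
    have h2 : lam * (lam * ρ ^ 2 + lam) = lam * (2 * ρ) := by
      have h3 : (lam * ρ) ^ 2 = (1 - s) ^ 2 := by rw [hlamρ]
      nlinarith [hs2, h3]
    exact mul_left_cancel₀ (ne_of_gt hpos) h2
  have h2' : lam * T < lam * ρ := by
    exact mul_lt_mul_of_pos_left hTρ hpos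
  have h3 : lam * ρ + lam * T < 2 := by nlinarith [hs0]
  nlinarith [hkey, hρeq, h3, sub_pos.2 hTρ, mul_pos (sub_pos.2 hTρ) (sub_pos.2 hTρ)]
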